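/- Let A be an associative unital ℚ-algebra and let (J0, Jp, Jm, P) be an osp(1,2)-realization in A. In A ⊗ A ⊗ A, with the intermediate Casimirs Γ_S for subsets S of {1,2,3} as defined in the context, the Bannai–Ito relation {Γ12, Γ13} = Γ23 + 2*Γ1*Γ123 + 2*Γ2*Γ3 holds, where {x,y} = x*y + y*x. -/

import Mathlib

set_option maxHeartbeats 1000000

open scoped TensorProduct

/-- Bannai–Ito relation: {Γ12, Γ13} = Γ23 + 2*Γ1*Γ123 + 2*Γ2*Γ3 in A ⊗ A ⊗ A. -/
theorem bannai_ito_relation_12_13 {A : Type*} [Ring A] [Algebra ℚ A]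
    (J0 Jp Jm P : A)
    (h1 : J0*Jp - Jp*J0 = Jp)
    (h2 : J0*Jm - Jm*J0 = -Jm)
    (h3 : Jp*Jm + Jm*Jp = 2*J0)
    (h4 : J0*P = P*J0)
    (h5 : Jp*P + P*Jp = 0)
    (h6 : Jm*P + P*Jm = 0)
    (h7 : P^2 = 1) :
    -- intermediate Casimir operators Γ_S in A ⊗ A ⊗ A for subsets S of {1,2,3}
    let Γ1 : A ⊗[ℚ] (A ⊗[ℚ] A) :=
      (J0 ⊗ₜ[ℚ] ((1:A) ⊗ₜ[ℚ] (1:A))) * (P ⊗ₜ[ℚ] ((1:A) ⊗ₜ[ℚ] (1:A)))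
        - (Jp ⊗ₜ[ℚ] ((1:A) ⊗ₜ[ℚ] (1:A))) * (Jm ⊗ₜ[ℚ] ((1:A) ⊗ₜ[ℚ] (1:A))) * (P ⊗ₜ[ℚ] ((1:A) ⊗ₜ[ℚ] (1:A)))
        - (1/2 : ℚ) • (P ⊗ₜ[ℚ] ((1:A) ⊗ₜ[ℚ] (1:A)))
    let Γ2 : A ⊗[ℚ] (A ⊗[ℚ] A) :=
      ((1:A) ⊗ₜ[ℚ] (J0 ⊗ₜ[ℚ] (1:A))) * ((1:A) ⊗ₜ[ℚ] (P ⊗ₜ[ℚ] (1:A)))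
        - ((1:A) ⊗ₜ[ℚ] (Jp ⊗ₜ[ℚ] (1:A))) * ((1:A) ⊗ₜ[ℚ] (Jm ⊗ₜ[ℚ] (1:A))) * ((1:A) ⊗ₜ[ℚ] (P ⊗ₜ[ℚ] (1:A)))
        - (1/2 : ℚ) • ((1:A) ⊗ₜ[ℚ] (P ⊗ₜ[ℚ] (1:A)))
    let Γ3 : A ⊗[ℚ] (A ⊗[ℚ] A) :=
      ((1:A) ⊗ₜ[ℚ] ((1:A) ⊗ₜ J0)) * ((1:A) ⊗ₜ[ℚ] ((1:A) ⊗ₜ P))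
        - ((1:A) ⊗ₜ[ℚ] ((1:A) ⊗ₜ Jp)) * ((1:A) ⊗ₜ[ℚ] ((1:A) ⊗ₜ Jm)) * ((1:A) ⊗ₜ[ℚ] ((1:A) ⊗ₜ P))
        - (1/2 : ℚ) • ((1:A) ⊗ₜ[ℚ] ((1:A) ⊗ₜ P))
    let Γ12 : A ⊗[ℚ] (A ⊗[ℚ] A) :=
      (J0 ⊗ₜ[ℚ] ((1:A) ⊗ₜ[ℚ] (1:A)) + (1:A) ⊗ₜ[ℚ] (J0 ⊗ₜ[ℚ] (1:A))) * (P ⊗ₜ[ℚ] (P ⊗ₜ[ℚ] (1:A)))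
        - (Jp ⊗ₜ[ℚ] (P ⊗ₜ[ℚ] (1:A)) + (1:A) ⊗ₜ[ℚ] (Jp ⊗ₜ[ℚ] (1:A)))
            * (Jm ⊗ₜ[ℚ] (P ⊗ₜ[ℚ] (1:A)) + (1:A) ⊗ₜ[ℚ] (Jm ⊗ₜ[ℚ] (1:A))) * (P ⊗ₜ[ℚ] (P ⊗ₜ[ℚ] (1:A)))
        - (1/2 : ℚ) • (P ⊗ₜ[ℚ] (P ⊗ₜ[ℚ] (1:A)))
    let Γ13 : A ⊗[ℚ] (A ⊗[ℚ] A) :=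
      (J0 ⊗ₜ[ℚ] ((1:A) ⊗ₜ[ℚ] (1:A)) + (1:A) ⊗ₜ[ℚ] ((1:A) ⊗ₜ J0)) * (P ⊗ₜ[ℚ] ((1:A) ⊗ₜ P))
        - (Jp ⊗ₜ[ℚ] (P ⊗ₜ P) + (1:A) ⊗ₜ[ℚ] ((1:A) ⊗ₜ Jp))
            * (Jm ⊗ₜ[ℚ] (P ⊗ₜ P) + (1:A) ⊗ₜ[ℚ] ((1:A) ⊗ₜ Jm)) * (P ⊗ₜ[ℚ] ((1:A) ⊗ₜ P))
        - (1/2 : ℚ) • (P ⊗ₜ[ℚ] ((1:A) ⊗ₜ P))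
    let Γ23 : A ⊗[ℚ] (A ⊗[ℚ] A) :=
      ((1:A) ⊗ₜ[ℚ] (J0 ⊗ₜ[ℚ] (1:A)) + (1:A) ⊗ₜ[ℚ] ((1:A) ⊗ₜ J0)) * ((1:A) ⊗ₜ[ℚ] (P ⊗ₜ P))
        - ((1:A) ⊗ₜ[ℚ] (Jp ⊗ₜ P) + (1:A) ⊗ₜ[ℚ] ((1:A) ⊗ₜ Jp))
            * ((1:A) ⊗ₜ[ℚ] (Jm ⊗ₜ P) + (1:A) ⊗ₜ[ℚ] ((1:A) ⊗ₜ Jm)) * ((1:A) ⊗ₜ[ℚ] (P ⊗ₜ P))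
        - (1/2 : ℚ) • ((1:A) ⊗ₜ[ℚ] (P ⊗ₜ P))
    let Γ123 : A ⊗[ℚ] (A ⊗[ℚ] A) :=
      (J0 ⊗ₜ[ℚ] ((1:A) ⊗ₜ[ℚ] (1:A)) + (1:A) ⊗ₜ[ℚ] (J0 ⊗ₜ[ℚ] (1:A)) + (1:A) ⊗ₜ[ℚ] ((1:A) ⊗ₜ J0))
          * (P ⊗ₜ[ℚ] (P ⊗ₜ P))
        - (Jp ⊗ₜ[ℚ] (P ⊗ₜ P) + (1:A) ⊗ₜ[ℚ] (Jp ⊗ₜ P) + (1:A) ⊗ₜ[ℚ] ((1:A) ⊗ₜ Jp))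
            * (Jm ⊗ₜ[ℚ] (P ⊗ₜ P) + (1:A) ⊗ₜ[ℚ] (Jm ⊗ₜ P) + (1:A) ⊗ₜ[ℚ] ((1:A) ⊗ₜ Jm))
            * (P ⊗ₜ[ℚ] (P ⊗ₜ P))
        - (1/2 : ℚ) • (P ⊗ₜ[ℚ] (P ⊗ₜ P))
    Γ12*Γ13 + Γ13*Γ12 = Γ23 + 2*Γ1*Γ123 + 2*Γ2*Γ3 := by

  intro Γ1 Γ2 Γ3 Γ12 Γ13 Γ23 Γ123
  have r4 : P * P = (1:A) := by rw [← pow_two]; exact h7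
  have r4' : ∀ x : A, P*(P*x) = x := fun x => by rw [← mul_assoc, r4, one_mul]
  have r1 : P*Jp = -(Jp*P) := by
    have := h5; linear_combination (norm := noncomm_ring) this
  have r1' : ∀ x : A, P*(Jp*x) = -(Jp*(P*x)) := fun x => by
    rw [← mul_assoc, r1, neg_mul, mul_assoc]
  have r2 : P*Jm = -(Jm*P) := by
    have := h6; linear_combination (norm := noncomm_ring) this
  have r2' : ∀ x : A, P*(Jm*x) = -(Jm*(P*x)) := fun x => by
    rw [← mul_assoc, r2, neg_mul, mul_assoc]
  have r3 : P*J0 = J0*P := h4.symm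
  have r3' : ∀ x : A, P*(J0*x) = J0*(P*x) := fun x => by
    rw [← mul_assoc, r3, mul_assoc]
  have r5 : Jp*Jm = J0 + J0 - Jm*Jp := by
    have := h3; linear_combination (norm := noncomm_ring) this
  have r5' : ∀ x : A, Jp*(Jm*x) = J0*x + J0*x - Jm*(Jp*x) := fun x => by
    rw [← mul_assoc, r5, sub_mul, add_mul, mul_assoc]
  have r6 : Jp*J0 = J0*Jp - Jp := by
    have := h1; linear_combination (norm := noncomm_ring) -this
  have r6' : ∀ x : A, Jp*(J0*x) = J0*(Jp*x) - Jp*x := fun x => by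
    rw [← mul_assoc, r6, sub_mul, mul_assoc]
  have r7 : J0*Jm = Jm*J0 - Jm := by
    have := h2; linear_combination (norm := noncomm_ring) this
  have r7' : ∀ x : A, J0*(Jm*x) = Jm*(J0*x) - Jm*x := fun x => by
    rw [← mul_assoc, r7, sub_mul, mul_assoc]
  simp only [Γ1, Γ2, Γ3, Γ12, Γ13, Γ23, Γ123, two_mul]
  simp (config := { maxSteps := 10000000 }) only [Algebra.TensorProduct.tmul_mul_tmul,
    mul_add, add_mul, mul_sub, sub_mul,
    mul_one, one_mul, neg_mul, mul_neg, neg_neg, neg_add, neg_sub, sub_neg_eq_add, mul_assoc,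
    smul_mul_assoc, mul_smul_comm, smul_smul,
    r1, r1', r2, r2', r3, r3', r4, r4', r5, r5', r6, r6', r7, r7',
    TensorProduct.tmul_add, TensorProduct.add_tmul, TensorProduct.tmul_sub,
    TensorProduct.sub_tmul, ← TensorProduct.neg_tmul,
    TensorProduct.tmul_smul, ← TensorProduct.smul_tmul', smul_neg, smul_add, smul_sub]
  simp only [TensorProduct.neg_tmul, TensorProduct.tmul_neg, neg_neg, smul_neg,
    sub_eq_add_neg]
  simp only [← neg_one_smul ℚ (M := A ⊗[ℚ] (A ⊗[ℚ] A)), smul_smul]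
  module
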